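/- Fix ξ ∈ ℂⁿ and f = (f₁,…,f_N) ∈ ℂ[x]^N. Let Λ₁,…,Λ_r ∈ ℂ[d_ξ] be of degree ≤ t−1 such that D = span(Λ₁,…,Λ_r) is stable under derivation and every Λ_j, as a functional, vanishes on f₁,…,f_N. Suppose scalars ν_j^k ∈ ℂ (j = 1,…,r, k = 1,…,n) satisfy the commutation relations Σ_{j=1}^r ( ν_j^k ∂_{d_l}(Λ_j) − ν_j^l ∂_{d_k}(Λ_j) ) = 0 for all 1 ≤ k < l ≤ n, and the functional Δ = Σ_{j=1}^r Σ_{k=1}^n ν_j^k ∫ᵏΛ_j satisfies Δ(f_l) = 0 for l = 1,…,N. Then Δ is a polynomial of degree ≤ t which, as a functional, vanishes on the ideal (f₁,…,f_N), i.e., Δ ∈ (f)^⊥ ∩ ℂ[d_ξ]_t, and D + ℂΔ is stable under derivation. -/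

import Mathlib

open MvPolynomial

/-- Total degree `|β|` of an exponent vector `β ∈ ℕⁿ`. -/
def mdeg {n : ℕ} (a : Fin n →₀ ℕ) : ℕ := ∑ i, a i

/-- Iterated partial derivative `∂^β p`. -/
noncomputable def pdiff {n : ℕ} (β : Fin n →₀ ℕ) (p : MvPolynomial (Fin n) ℂ) :
    MvPolynomial (Fin n) ℂ :=
  (List.finRange n).foldr (fun i q => (fun r => pderiv i r)^[β i] q) p

/-- The linear functional on `ℂ[x]` attached to the dual polynomial `Λ ∈ ℂ[d_ξ]`:
`Λ(p) = Σ_β coeff_β(Λ) • (∂^β p)(ξ)`. -/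
noncomputable def dapply {n : ℕ} (ξ : Fin n → ℂ) (Λ p : MvPolynomial (Fin n) ℂ) : ℂ :=
  ∑ β ∈ Λ.support, coeff β Λ * eval ξ (pdiff β p)

/-- The shifted monomial `(x-ξ)^β`. -/
noncomputable def xpow {n : ℕ} (ξ : Fin n → ℂ) (β : Fin n →₀ ℕ) : MvPolynomial (Fin n) ℂ :=
  ∏ i, (X i - C (ξ i)) ^ β i

/-- `∫ᵏΛ`: substitute `0` for `d_{k+1},…,d_n` in `Λ` and take the antiderivative with
respect to `d_k` having no constant term. -/
noncomputable def integ {n : ℕ} (k : Fin n) (Λ : MvPolynomial (Fin n) ℂ) :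
    MvPolynomial (Fin n) ℂ :=
  let Λ' := aeval (fun i => if i ≤ k then X i else 0) Λ
  ∑ β ∈ Λ'.support, monomial (β + Finsupp.single k 1) (coeff β Λ' / ((β k : ℂ) + 1))

/-- The maximal ideal `m_ξ` of polynomials vanishing at `ξ`. -/
noncomputable def mIdeal {n : ℕ} (ξ : Fin n → ℂ) : Ideal (MvPolynomial (Fin n) ℂ) :=
  RingHom.ker (eval ξ)

/-- `β! = β₁!⋯βₙ!`. -/
def ffact {n : ℕ} (a : Fin n →₀ ℕ) : ℕ := ∏ i, (a i).factorial

variable {n : ℕ}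

lemma iter_pderiv_add (i : Fin n) (m : ℕ) (p q : MvPolynomial (Fin n) ℂ) :
    (fun r => pderiv i r)^[m] (p + q) = (fun r => pderiv i r)^[m] p + (fun r => pderiv i r)^[m] q := by
  induction m generalizing p q with
  | zero => rfl
  | succ m ih => simp only [Function.iterate_succ_apply, map_add]; exact ih _ _

lemma iter_pderiv_smul (i : Fin n) (m : ℕ) (a : ℂ) (p : MvPolynomial (Fin n) ℂ) :
    (fun r => pderiv i r)^[m] (a • p) = a • (fun r => pderiv i r)^[m] p := by
  induction m generalizing p with
  | zero => rfl
  | succ m ih =>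
    rw [Function.iterate_succ_apply, Function.iterate_succ_apply]
    rw [show (pderiv i) (a • p) = a • pderiv i p from (pderiv i).map_smul a p]
    exact ih _

private lemma F_add (β : Fin n →₀ ℕ) (l : List (Fin n)) (p q : MvPolynomial (Fin n) ℂ) :
    l.foldr (fun i r => (fun s => pderiv i s)^[β i] r) (p + q)
      = l.foldr (fun i r => (fun s => pderiv i s)^[β i] r) p
        + l.foldr (fun i r => (fun s => pderiv i s)^[β i] r) q := by
  induction l generalizing p q with
  | nil => rfl
  | cons a l ih => simp only [List.foldr_cons, ih, iter_pderiv_add]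

private lemma F_smul (β : Fin n →₀ ℕ) (l : List (Fin n)) (a : ℂ) (p : MvPolynomial (Fin n) ℂ) :
    l.foldr (fun i r => (fun s => pderiv i s)^[β i] r) (a • p)
      = a • l.foldr (fun i r => (fun s => pderiv i s)^[β i] r) p := by
  induction l generalizing p with
  | nil => rfl
  | cons c l ih => simp only [List.foldr_cons, ih, iter_pderiv_smul]

lemma pdiff_add (β : Fin n →₀ ℕ) (p q : MvPolynomial (Fin n) ℂ) :
    pdiff β (p + q) = pdiff β p + pdiff β q := F_add β _ p q

lemma pdiff_smul (β : Fin n →₀ ℕ) (a : ℂ) (p : MvPolynomial (Fin n) ℂ) :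
    pdiff β (a • p) = a • pdiff β p := F_smul β _ a p


lemma coeff_pderiv (i : Fin n) (R : MvPolynomial (Fin n) ℂ) (γ : Fin n →₀ ℕ) :
    coeff γ (pderiv i R) = ((γ i : ℂ) + 1) * coeff (γ + Finsupp.single i 1) R := by
  induction R using MvPolynomial.induction_on' with
  | monomial s a =>
    rw [pderiv_monomial, coeff_monomial, coeff_monomial]
    by_cases h : s = γ + Finsupp.single i 1
    · subst h
      have h1 : γ + Finsupp.single i 1 - Finsupp.single i 1 = γ := by
        ext m; simp [Finsupp.single_apply]
      rw [if_pos h1]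
      have : ((γ + Finsupp.single i 1 : Fin n →₀ ℕ)) i = γ i + 1 := by simp
      rw [this]; simp; push_cast; ring
    · rw [if_neg h]
      by_cases h2 : s - Finsupp.single i 1 = γ
      · rw [if_pos h2]
        by_cases h3 : s i = 0
        · simp [h3]
        · exfalso; apply h
          rw [← h2]; ext m
          rcases eq_or_ne m i with rfl | hm
          · simp [Nat.sub_add_cancel (Nat.one_le_iff_ne_zero.2 h3)]
          · simp [Finsupp.single_apply, Ne.symm hm]
      · rw [if_neg h2, mul_zero]
  | add p q hp hq => simp [map_add, coeff_add, hp, hq]; ring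

lemma pderiv_comm (i j : Fin n) (R : MvPolynomial (Fin n) ℂ) :
    pderiv i (pderiv j R) = pderiv j (pderiv i R) := by
  apply MvPolynomial.ext
  intro γ
  rw [coeff_pderiv, coeff_pderiv, coeff_pderiv, coeff_pderiv]
  rcases eq_or_ne i j with rfl | h
  · ring
  · have h1 : ((γ + Finsupp.single i 1 : Fin n →₀ ℕ)) j = γ j := by simp [Finsupp.single_apply, h, h.symm]
    have h2 : ((γ + Finsupp.single j 1 : Fin n →₀ ℕ)) i = γ i := by simp [Finsupp.single_apply, h, h.symm]
    have h3 : γ + Finsupp.single i 1 + Finsupp.single j 1 = γ + Finsupp.single j 1 + Finsupp.single i 1 := by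
      ext m; simp; ring
    rw [h1, h2, h3]; ring

lemma pderiv_iter_comm (k i : Fin n) (m : ℕ) (p : MvPolynomial (Fin n) ℂ) :
    pderiv k ((fun r => pderiv i r)^[m] p) = (fun r => pderiv i r)^[m] (pderiv k p) := by
  induction m generalizing p with
  | zero => rfl
  | succ m ih =>
    rw [Function.iterate_succ_apply, Function.iterate_succ_apply, ih, pderiv_comm]

lemma pderiv_F (k : Fin n) (β : Fin n →₀ ℕ) (l : List (Fin n)) (p : MvPolynomial (Fin n) ℂ) :
    pderiv k (l.foldr (fun i r => (fun s => pderiv i s)^[β i] r) p)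
      = l.foldr (fun i r => (fun s => pderiv i s)^[β i] r) (pderiv k p) := by
  induction l generalizing p with
  | nil => rfl
  | cons a l ih => simp only [List.foldr_cons, pderiv_iter_comm, ih]

lemma pderiv_pdiff (k : Fin n) (β : Fin n →₀ ℕ) (p : MvPolynomial (Fin n) ℂ) :
    pderiv k (pdiff β p) = pdiff β (pderiv k p) := pderiv_F k β _ p

lemma F_congr (β δ : Fin n →₀ ℕ) (l : List (Fin n)) (p : MvPolynomial (Fin n) ℂ)
    (h : ∀ i ∈ l, β i = δ i) :
    l.foldr (fun i r => (fun s => pderiv i s)^[β i] r) p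
      = l.foldr (fun i r => (fun s => pderiv i s)^[δ i] r) p := by
  induction l generalizing p with
  | nil => rfl
  | cons a l ih =>
    simp only [List.foldr_cons]
    rw [h a (List.mem_cons_self), ih _ (fun i hi => h i (List.mem_cons_of_mem a hi))]

lemma F_add_single (β : Fin n →₀ ℕ) (j : Fin n) (l : List (Fin n)) (p : MvPolynomial (Fin n) ℂ)
    (hj : j ∈ l) (hnd : l.Nodup) :
    l.foldr (fun i r => (fun s => pderiv i s)^[((β + Finsupp.single j 1 : Fin n →₀ ℕ)) i] r) p
      = pderiv j (l.foldr (fun i r => (fun s => pderiv i s)^[β i] r) p) := by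
  induction l generalizing p with
  | nil => simp at hj
  | cons a l ih =>
    rcases List.nodup_cons.1 hnd with ⟨ha, hnd'⟩
    simp only [List.foldr_cons]
    rcases eq_or_ne a j with rfl | hne
    · have h1 : ∀ i ∈ l, ((β + Finsupp.single a 1 : Fin n →₀ ℕ)) i = β i := by
        intro i hi
        have hia : i ≠ a := fun h => ha (h ▸ hi)
        simp [Finsupp.single_apply, hia, hia.symm]
      rw [F_congr _ β _ _ h1]
      have h2 : ((β + Finsupp.single a 1 : Fin n →₀ ℕ)) a = β a + 1 := by simp
      rw [h2, Function.iterate_succ_apply']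
    · have hj' : j ∈ l := by
        rcases List.mem_cons.1 hj with h | h
        · exact absurd h.symm hne
        · exact h
      have h2 : ((β + Finsupp.single j 1 : Fin n →₀ ℕ)) a = β a := by
        simp [Finsupp.single_apply, hne, hne.symm]
      rw [h2, ih _ hj' hnd', pderiv_iter_comm]

lemma pdiff_zero' (p : MvPolynomial (Fin n) ℂ) : pdiff 0 p = p := by
  unfold pdiff
  induction List.finRange n with
  | nil => rfl
  | cons a l ih =>
    simp only [List.foldr_cons, Finsupp.coe_zero, Pi.zero_apply, Function.iterate_zero,
      id_eq] at ih ⊢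
    exact ih

lemma pdiff_add_single (β : Fin n →₀ ℕ) (j : Fin n) (p : MvPolynomial (Fin n) ℂ) :
    pdiff (β + Finsupp.single j 1) p = pdiff β (pderiv j p) := by
  unfold pdiff
  rw [F_add_single β j _ p (List.mem_finRange j) (List.nodup_finRange n), pderiv_F]

lemma mdeg_add_single (β : Fin n →₀ ℕ) (j : Fin n) :
    mdeg (β + Finsupp.single j 1) = mdeg β + 1 := by
  unfold mdeg
  rw [Finset.sum_congr rfl (fun i _ => Finsupp.add_apply β (Finsupp.single j 1) i),
    Finset.sum_add_distrib]
  congr 1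
  simp [Finsupp.single_apply]

lemma sub_single_add_single_comm (β : Fin n →₀ ℕ) (i j : Fin n) (hne : i ≠ j) :
    (β - Finsupp.single i 1) + Finsupp.single j 1 = (β + Finsupp.single j 1) - Finsupp.single i 1 := by
  ext m
  simp only [Finsupp.add_apply, Finsupp.tsub_apply, Finsupp.single_apply]
  rcases eq_or_ne m i with rfl | hi
  · simp [hne, Ne.symm hne]
  · rcases eq_or_ne m j with rfl | hj <;> simp [Ne.symm hi, *] <;> omega

lemma pdiff_X_mul (i : Fin n) (β : Fin n →₀ ℕ) (p : MvPolynomial (Fin n) ℂ) :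
    pdiff β (X i * p) = X i * pdiff β p + (β i) • pdiff (β - Finsupp.single i 1) p := by
  suffices H : ∀ s (β : Fin n →₀ ℕ), mdeg β = s → ∀ p,
      pdiff β (X i * p) = X i * pdiff β p + (β i) • pdiff (β - Finsupp.single i 1) p by
    exact H (mdeg β) β rfl p
  intro s
  induction s with
  | zero =>
    intro β hβ p
    have hb : β = 0 := by
      ext m
      have := (Finset.sum_eq_zero_iff.1 hβ) m (Finset.mem_univ m)
      simpa using this
    subst hb
    simp [pdiff_zero']
  | succ s ih =>
    intro β hβ p
    obtain ⟨j, hj⟩ : ∃ j, β j ≠ 0 := by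
      by_contra h
      push_neg at h
      have : mdeg β = 0 := Finset.sum_eq_zero (fun i _ => h i)
      omega
    have hrec : β = (β - Finsupp.single j 1) + Finsupp.single j 1 := by
      ext m
      simp only [Finsupp.add_apply, Finsupp.tsub_apply, Finsupp.single_apply]
      rcases eq_or_ne j m with rfl | hm
      · simp; omega
      · simp [hm]
    set β' := β - Finsupp.single j 1 with hβ'
    have hmd : mdeg β' = s := by
      have h1 : mdeg (β' + Finsupp.single j 1) = mdeg β' + 1 := mdeg_add_single β' j
      rw [← hrec] at h1
      omega
    rw [hrec, pdiff_add_single, pderiv_mul]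
    rcases eq_or_ne i j with rfl | hne
    · rw [pderiv_X_self, one_mul, pdiff_add, ih β' hmd (pderiv i p)]
      rw [show pdiff β' (pderiv i p) = pdiff (β' + Finsupp.single i 1) p from
        (pdiff_add_single β' i p).symm]
      rw [show pdiff (β' - Finsupp.single i 1) (pderiv i p)
          = pdiff ((β' - Finsupp.single i 1) + Finsupp.single i 1) p from
        (pdiff_add_single _ i p).symm]
      have hii : ((β' + Finsupp.single i 1 : Fin n →₀ ℕ)) i = β' i + 1 := by simp
      have hsub : (β' + Finsupp.single i 1) - Finsupp.single i 1 = β' := by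
        ext m
        simp only [Finsupp.add_apply, Finsupp.tsub_apply, Finsupp.single_apply]
        omega
      rw [hii, hsub]
      rcases Nat.eq_zero_or_pos (β' i) with h0 | h0
      · rw [h0]
        simp only [zero_add, zero_smul, add_zero, one_smul, one_nsmul]
        exact add_comm _ _
      · have : (β' - Finsupp.single i 1) + Finsupp.single i 1 = β' := by
          ext m
          simp only [Finsupp.add_apply, Finsupp.tsub_apply, Finsupp.single_apply]
          rcases eq_or_ne i m with rfl | hm
          · simp; omega
          · simp [hm]
        rw [this, succ_nsmul]
        abel
    · rw [pderiv_X_of_ne hne, zero_mul, zero_add, ih β' hmd (pderiv j p)]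
      rw [show pdiff β' (pderiv j p) = pdiff (β' + Finsupp.single j 1) p from
        (pdiff_add_single β' j p).symm]
      rw [show pdiff (β' - Finsupp.single i 1) (pderiv j p)
          = pdiff ((β' - Finsupp.single i 1) + Finsupp.single j 1) p from
        (pdiff_add_single _ j p).symm]
      rw [sub_single_add_single_comm β' i j hne]
      have : ((β' + Finsupp.single j 1 : Fin n →₀ ℕ)) i = β' i := by
        simp [Finsupp.single_apply, hne, (Ne.symm hne)]
      rw [this]

variable {ξ : Fin n → ℂ}

lemma dapply_eq_sum (s : Finset (Fin n →₀ ℕ)) (Λ p : MvPolynomial (Fin n) ℂ)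
    (hs : Λ.support ⊆ s) :
    dapply ξ Λ p = ∑ β ∈ s, coeff β Λ * eval ξ (pdiff β p) :=
  Finset.sum_subset hs (fun β _ hβ => by
    rw [MvPolynomial.notMem_support_iff.1 hβ, zero_mul])

lemma dapply_add_left (Λ₁ Λ₂ p : MvPolynomial (Fin n) ℂ) :
    dapply ξ (Λ₁ + Λ₂) p = dapply ξ Λ₁ p + dapply ξ Λ₂ p := by
  rw [dapply_eq_sum (Λ₁.support ∪ Λ₂.support ∪ (Λ₁ + Λ₂).support) (Λ₁ + Λ₂) p
      (by intro x hx; exact Finset.mem_union_right _ hx),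
    dapply_eq_sum (Λ₁.support ∪ Λ₂.support ∪ (Λ₁ + Λ₂).support) Λ₁ p
      (by intro x hx; exact Finset.mem_union_left _ (Finset.mem_union_left _ hx)),
    dapply_eq_sum (Λ₁.support ∪ Λ₂.support ∪ (Λ₁ + Λ₂).support) Λ₂ p
      (by intro x hx; exact Finset.mem_union_left _ (Finset.mem_union_right _ hx)),
    ← Finset.sum_add_distrib]
  exact Finset.sum_congr rfl (fun β _ => by rw [coeff_add]; ring)

lemma dapply_smul_left (a : ℂ) (Λ p : MvPolynomial (Fin n) ℂ) :
    dapply ξ (a • Λ) p = a * dapply ξ Λ p := by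
  rw [dapply_eq_sum (Λ.support ∪ (a • Λ).support) (a • Λ) p
      (fun x hx => Finset.mem_union_right _ hx),
    dapply_eq_sum (Λ.support ∪ (a • Λ).support) Λ p
      (fun x hx => Finset.mem_union_left _ hx),
    Finset.mul_sum]
  exact Finset.sum_congr rfl (fun β _ => by
    rw [MvPolynomial.coeff_smul]; simp; ring)

lemma dapply_zero_left (p : MvPolynomial (Fin n) ℂ) : dapply ξ 0 p = 0 := by
  simp [dapply]

lemma dapply_monomial_left (β : Fin n →₀ ℕ) (c : ℂ) (p : MvPolynomial (Fin n) ℂ) :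
    dapply ξ (monomial β c) p = c * eval ξ (pdiff β p) := by
  rcases eq_or_ne c 0 with rfl | hc
  · simp [dapply]
  · rw [dapply, support_monomial, if_neg hc, Finset.sum_singleton, coeff_monomial, if_pos rfl]

lemma dapply_add_right (Λ p q : MvPolynomial (Fin n) ℂ) :
    dapply ξ Λ (p + q) = dapply ξ Λ p + dapply ξ Λ q := by
  unfold dapply
  rw [← Finset.sum_add_distrib]
  exact Finset.sum_congr rfl (fun β _ => by rw [pdiff_add, map_add]; ring)

lemma dapply_smul_right (Λ : MvPolynomial (Fin n) ℂ) (a : ℂ) (p : MvPolynomial (Fin n) ℂ) :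
    dapply ξ Λ (a • p) = a * dapply ξ Λ p := by
  unfold dapply
  rw [Finset.mul_sum]
  exact Finset.sum_congr rfl (fun β _ => by rw [pdiff_smul, smul_eq_C_mul, map_mul, eval_C]; ring)

lemma dapply_X_mul (Λ p : MvPolynomial (Fin n) ℂ) (i : Fin n) :
    dapply ξ Λ (X i * p) = ξ i * dapply ξ Λ p + dapply ξ (pderiv i Λ) p := by
  induction Λ using MvPolynomial.induction_on' with
  | monomial β c =>
    rw [dapply_monomial_left, pdiff_X_mul, map_add, map_mul, eval_X, map_nsmul,
      pderiv_monomial, dapply_monomial_left, dapply_monomial_left]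
    simp only [nsmul_eq_mul]
    push_cast
    ring
  | add r s hr hs =>
    rw [dapply_add_left, map_add, dapply_add_left, dapply_add_left, hr, hs]
    ring

lemma aeval_ite_monomial (P : Fin n → Prop) [DecidablePred P] (β : Fin n →₀ ℕ) (c : ℂ) :
    aeval (fun i => if P i then X i else 0) (monomial β c)
      = if (∀ i, β i ≠ 0 → P i) then monomial β c else 0 := by
  rw [aeval_monomial]
  by_cases h : ∀ i, β i ≠ 0 → P i
  · rw [if_pos h]
    have hprod : (β.prod fun i k => (fun i => if P i then (X i : MvPolynomial (Fin n) ℂ) else 0) i ^ k)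
        = β.prod fun i k => (X i : MvPolynomial (Fin n) ℂ) ^ k := by
      apply Finset.prod_congr rfl
      intro i hi
      simp only [if_pos (h i (Finsupp.mem_support_iff.1 hi))]
    rw [hprod]
    simp [monomial_eq, algebraMap_eq]
  · rw [if_neg h]
    push_neg at h
    obtain ⟨i, hi, hPi⟩ := h
    have : (β.prod fun i k => (fun i => if P i then (X i : MvPolynomial (Fin n) ℂ) else 0) i ^ k) = 0 := by
      apply Finset.prod_eq_zero (Finsupp.mem_support_iff.2 hi)
      simp only [if_neg hPi]
      exact zero_pow hi
    rw [this, mul_zero]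

lemma coeff_aeval_ite (P : Fin n → Prop) [DecidablePred P] (Λ : MvPolynomial (Fin n) ℂ)
    (γ : Fin n →₀ ℕ) :
    coeff γ (aeval (fun i => if P i then X i else 0) Λ)
      = if (∀ i, γ i ≠ 0 → P i) then coeff γ Λ else 0 := by
  conv_lhs => rw [Λ.as_sum, map_sum]
  rw [MvPolynomial.coeff_sum]
  rw [Finset.sum_eq_single γ]
  · rw [aeval_ite_monomial]
    split_ifs with h1
    · rw [coeff_monomial, if_pos rfl]
    · rw [coeff_zero]
  · intro β hβ hne
    rw [aeval_ite_monomial]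
    split_ifs with h1
    · rw [coeff_monomial, if_neg hne]
    · rw [coeff_zero]
  · intro hγ
    rw [aeval_ite_monomial, MvPolynomial.notMem_support_iff.1 hγ]
    split_ifs <;> simp

lemma coeff_integ (k : Fin n) (Λ : MvPolynomial (Fin n) ℂ) (γ : Fin n →₀ ℕ) :
    coeff γ (integ k Λ)
      = if γ k = 0 then 0
        else coeff (γ - Finsupp.single k 1) (aeval (fun i => if i ≤ k then X i else 0) Λ)
          / (γ k : ℂ) := by
  set Q := aeval (fun i => if i ≤ k then (X i : MvPolynomial (Fin n) ℂ) else 0) Λ with hQ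
  have hI : integ k Λ = ∑ β ∈ Q.support,
      monomial (β + Finsupp.single k 1) (coeff β Q / ((β k : ℂ) + 1)) := rfl
  rw [hI, MvPolynomial.coeff_sum]
  by_cases h0 : γ k = 0
  · rw [if_pos h0]
    apply Finset.sum_eq_zero
    intro β _
    rw [coeff_monomial, if_neg]
    intro h
    apply_fun (fun δ => δ k) at h
    simp at h
    omega
  · rw [if_neg h0]
    rw [Finset.sum_eq_single (γ - Finsupp.single k 1)]
    · rw [coeff_monomial, if_pos]
      · congr 1
        have : ((γ - Finsupp.single k 1 : Fin n →₀ ℕ)) k = γ k - 1 := by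
          simp [Finsupp.tsub_apply]
        rw [this]
        rw [Nat.cast_sub (Nat.one_le_iff_ne_zero.2 h0)]
        push_cast
        ring
      · ext m
        simp only [Finsupp.add_apply, Finsupp.tsub_apply, Finsupp.single_apply]
        rcases eq_or_ne k m with rfl | hm
        · simp
          omega
        · simp [hm]
    · intro β _ hne
      rw [coeff_monomial, if_neg]
      intro h
      apply hne
      rw [← h]
      ext m
      simp only [Finsupp.add_apply, Finsupp.tsub_apply, Finsupp.single_apply]
      omega
    · intro hγ
      rw [MvPolynomial.notMem_support_iff.1 hγ, zero_div, coeff_monomial]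
      split_ifs <;> rfl

lemma pderiv_aeval_le (k l : Fin n) (hkl : k ≤ l) (Λ : MvPolynomial (Fin n) ℂ) :
    pderiv k (aeval (fun i => if i ≤ l then (X i : MvPolynomial (Fin n) ℂ) else 0) Λ)
      = aeval (fun i => if i ≤ l then (X i : MvPolynomial (Fin n) ℂ) else 0) (pderiv k Λ) := by
  apply MvPolynomial.ext
  intro γ
  rw [coeff_pderiv, coeff_aeval_ite (fun i => i ≤ l), coeff_aeval_ite (fun i => i ≤ l),
    coeff_pderiv]
  by_cases h : ∀ i, γ i ≠ 0 → i ≤ l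
  · rw [if_pos h, if_pos]
    intro i hi
    rcases eq_or_ne i k with rfl | hik
    · exact hkl
    · apply h
      simpa [Finsupp.add_apply, Finsupp.single_apply, Ne.symm hik] using hi
  · rw [if_neg h, if_neg, mul_zero]
    intro hc
    apply h
    intro i hi
    apply hc
    simp only [Finsupp.add_apply, Finsupp.single_apply]
    intro hz
    omega

lemma pderiv_integ_self (k : Fin n) (Λ : MvPolynomial (Fin n) ℂ) :
    pderiv k (integ k Λ) = aeval (fun i => if i ≤ k then X i else 0) Λ := by
  apply MvPolynomial.ext
  intro γ
  rw [coeff_pderiv, coeff_integ]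
  have h1 : ((γ + Finsupp.single k 1 : Fin n →₀ ℕ)) k = γ k + 1 := by simp
  rw [h1, if_neg (by omega)]
  have h2 : (γ + Finsupp.single k 1) - Finsupp.single k 1 = γ := by
    ext m; simp only [Finsupp.add_apply, Finsupp.tsub_apply, Finsupp.single_apply]; omega
  rw [h2]
  have hne : ((γ k : ℂ) + 1) ≠ 0 := Nat.cast_add_one_ne_zero _
  push_cast
  field_simp

lemma pderiv_integ_lt (k l : Fin n) (hlk : l < k) (Λ : MvPolynomial (Fin n) ℂ) :
    pderiv k (integ l Λ) = 0 := by
  apply MvPolynomial.ext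
  intro γ
  rw [coeff_pderiv, coeff_integ, coeff_zero]
  have h1 : ((γ + Finsupp.single k 1 : Fin n →₀ ℕ)) l = γ l := by
    simp [Finsupp.single_apply, Finsupp.add_apply, (ne_of_gt hlk)]
  rw [h1]
  by_cases h0 : γ l = 0
  · rw [if_pos h0, mul_zero]
  · rw [if_neg h0, coeff_aeval_ite (fun i => i ≤ l), if_neg, zero_div, mul_zero]
    intro hc
    have hk := hc k
    have hkval : ((γ + Finsupp.single k 1 - Finsupp.single l 1 : Fin n →₀ ℕ)) k = γ k + 1 := by
      simp only [Finsupp.add_apply, Finsupp.tsub_apply, Finsupp.single_apply]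
      have : l ≠ k := ne_of_lt hlk
      simp [this]
    rw [hkval] at hk
    have := hk (by omega)
    exact absurd this (not_le.2 hlk)

lemma pderiv_integ_gt (k l : Fin n) (hkl : k < l) (Λ : MvPolynomial (Fin n) ℂ) :
    pderiv k (integ l Λ) = integ l (pderiv k Λ) := by
  apply MvPolynomial.ext
  intro γ
  rw [coeff_pderiv, coeff_integ, coeff_integ]
  have hkl' : k ≠ l := ne_of_lt hkl
  have h1 : ((γ + Finsupp.single k 1 : Fin n →₀ ℕ)) l = γ l := by
    simp [Finsupp.single_apply, Finsupp.add_apply, hkl']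
  rw [h1]
  by_cases h0 : γ l = 0
  · rw [if_pos h0, if_pos h0, mul_zero]
  · rw [if_neg h0, if_neg h0]
    rw [← pderiv_aeval_le k l (le_of_lt hkl), coeff_pderiv]
    have h2 : γ + Finsupp.single k 1 - Finsupp.single l 1
        = (γ - Finsupp.single l 1) + Finsupp.single k 1 := by
      ext m; simp only [Finsupp.add_apply, Finsupp.tsub_apply, Finsupp.single_apply]
      rcases eq_or_ne k m with rfl | hm
      · have : ¬ (l = k) := Ne.symm hkl'
        simp [this]
      · rcases eq_or_ne l m with rfl | hm2
        · simp [hm]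
        · simp [hm, hm2]
    have h3 : ((γ - Finsupp.single l 1 : Fin n →₀ ℕ)) k = γ k := by
      simp [Finsupp.tsub_apply, Finsupp.single_apply, hkl', Ne.symm hkl']
    rw [h2, h3]
    ring

lemma integ_pderiv_self (l : Fin n) (Λ : MvPolynomial (Fin n) ℂ) :
    integ l (pderiv l Λ)
      = aeval (fun i => if i ≤ l then (X i : MvPolynomial (Fin n) ℂ) else 0) Λ
        - aeval (fun i => if i < l then (X i : MvPolynomial (Fin n) ℂ) else 0) Λ := by
  apply MvPolynomial.ext
  intro γ
  rw [coeff_sub, coeff_integ, coeff_aeval_ite (fun i => i < l)]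
  by_cases h0 : γ l = 0
  · rw [if_pos h0, coeff_aeval_ite (fun i => i ≤ l)]
    by_cases hc : ∀ i, γ i ≠ 0 → i < l
    · rw [if_pos hc, if_pos (fun i hi => le_of_lt (hc i hi)), sub_self]
    · rw [if_neg hc, if_neg, sub_zero]
      intro hc2
      apply hc
      intro i hi
      have hil : i ≠ l := fun h => hi (h ▸ h0)
      exact lt_of_le_of_ne (hc2 i hi) hil
  · rw [if_neg h0, ← pderiv_aeval_le l l le_rfl, coeff_pderiv]
    rw [if_neg (fun hc => absurd (hc l h0) (lt_irrefl l))]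
    have h2 : (γ - Finsupp.single l 1) + Finsupp.single l 1 = γ := by
      ext m; simp only [Finsupp.add_apply, Finsupp.tsub_apply, Finsupp.single_apply]
      rcases eq_or_ne l m with rfl | hm
      · simp; omega
      · simp [hm]
    have h3 : ((γ - Finsupp.single l 1 : Fin n →₀ ℕ)) l = γ l - 1 := by
      simp [Finsupp.tsub_apply]
    rw [h2, h3, sub_zero, Nat.cast_sub (Nat.one_le_iff_ne_zero.2 h0)]
    have hne : ((γ l : ℂ)) ≠ 0 := Nat.cast_ne_zero.2 h0
    push_cast
    field_simp
    ring

lemma integ_zero (l : Fin n) : integ l (0 : MvPolynomial (Fin n) ℂ) = 0 := by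
  apply MvPolynomial.ext
  intro γ
  rw [coeff_integ, map_zero, coeff_zero, coeff_zero, zero_div]
  split_ifs <;> rfl

lemma integ_add (l : Fin n) (P Q : MvPolynomial (Fin n) ℂ) :
    integ l (P + Q) = integ l P + integ l Q := by
  apply MvPolynomial.ext
  intro γ
  rw [coeff_add, coeff_integ, coeff_integ, coeff_integ, map_add, coeff_add, add_div]
  split_ifs
  · rw [add_zero]
  · rfl

lemma integ_smul (l : Fin n) (a : ℂ) (P : MvPolynomial (Fin n) ℂ) :
    integ l (a • P) = a • integ l P := by
  apply MvPolynomial.ext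
  intro γ
  rw [MvPolynomial.coeff_smul, coeff_integ, coeff_integ, map_smul, MvPolynomial.coeff_smul]
  split_ifs
  · rw [smul_zero]
  · rw [smul_eq_mul, smul_eq_mul, mul_div_assoc]

lemma integ_sum {ι : Type*} (l : Fin n) (s : Finset ι) (g : ι → MvPolynomial (Fin n) ℂ) :
    integ l (∑ j ∈ s, g j) = ∑ j ∈ s, integ l (g j) := by
  induction s using Finset.cons_induction with
  | empty => simp [integ_zero]
  | cons a s ha ih => rw [Finset.sum_cons, Finset.sum_cons, integ_add, ih]

lemma telescope (k : Fin n) (Λ : MvPolynomial (Fin n) ℂ) :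
    aeval (fun i => if i ≤ k then (X i : MvPolynomial (Fin n) ℂ) else 0) Λ
      + ∑ l ∈ Finset.Ioi k,
          (aeval (fun i => if i ≤ l then (X i : MvPolynomial (Fin n) ℂ) else 0) Λ
            - aeval (fun i => if i < l then (X i : MvPolynomial (Fin n) ℂ) else 0) Λ)
      = Λ := by
  apply MvPolynomial.ext
  intro γ
  rw [coeff_add, MvPolynomial.coeff_sum]
  simp only [coeff_sub]
  rw [coeff_aeval_ite (fun i => i ≤ k)]
  by_cases hk : ∀ i, γ i ≠ 0 → i ≤ k
  · rw [if_pos hk, Finset.sum_eq_zero, add_zero]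
    intro l hl
    rw [coeff_aeval_ite (fun i => i ≤ l), coeff_aeval_ite (fun i => i < l)]
    rw [if_pos (fun i hi => le_of_lt (lt_of_le_of_lt (hk i hi) (Finset.mem_Ioi.1 hl))),
      if_pos (fun i hi => lt_of_le_of_lt (hk i hi) (Finset.mem_Ioi.1 hl)), sub_self]
  · rw [if_neg hk, zero_add]
    push_neg at hk
    obtain ⟨i₀, hi₀, hik⟩ := hk
    have hS : γ.support.Nonempty := ⟨i₀, Finsupp.mem_support_iff.2 hi₀⟩
    set L := γ.support.max' hS with hL
    have hLs : γ L ≠ 0 := Finsupp.mem_support_iff.1 (γ.support.max'_mem hS)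
    have hle : ∀ i, γ i ≠ 0 → i ≤ L := fun i hi =>
      Finset.le_max' _ i (Finsupp.mem_support_iff.2 hi)
    have hkL : k < L := lt_of_lt_of_le hik (hle i₀ hi₀)
    rw [Finset.sum_eq_single L]
    · rw [coeff_aeval_ite (fun i => i ≤ L), coeff_aeval_ite (fun i => i < L),
        if_pos hle, if_neg (fun hc => absurd (hc L hLs) (lt_irrefl L)), sub_zero]
    · intro l hl hne
      rw [coeff_aeval_ite (fun i => i ≤ l), coeff_aeval_ite (fun i => i < l)]
      by_cases hcl : ∀ i, γ i ≠ 0 → i ≤ l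
      · have hLl : L < l := lt_of_le_of_ne (hcl L hLs) (fun h => hne h.symm)
        rw [if_pos hcl, if_pos (fun i hi => lt_of_le_of_lt (hle i hi) hLl), sub_self]
      · rw [if_neg hcl, if_neg (fun hc => hcl (fun i hi => le_of_lt (hc i hi))), sub_self]
    · intro hL'
      exact absurd (Finset.mem_Ioi.2 hkL) hL'

lemma key_deriv {r : ℕ} (Λ : Fin r → MvPolynomial (Fin n) ℂ) (ν : Fin r → Fin n → ℂ)
    (hcomm : ∀ k l : Fin n, k < l →
      ∑ j, (ν j k • pderiv l (Λ j) - ν j l • pderiv k (Λ j)) = 0)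
    (k : Fin n) :
    pderiv k (∑ j, ∑ l, ν j l • integ l (Λ j)) = ∑ j, ν j k • Λ j := by
  have step1 : ∀ j, pderiv k (∑ l, ν j l • integ l (Λ j))
      = ν j k • aeval (fun i => if i ≤ k then (X i : MvPolynomial (Fin n) ℂ) else 0) (Λ j)
        + ∑ l ∈ Finset.Ioi k, ν j l • integ l (pderiv k (Λ j)) := by
    intro j
    rw [map_sum]
    have hterm : ∀ l : Fin n, pderiv k (ν j l • integ l (Λ j)) = ν j l • pderiv k (integ l (Λ j)) :=
      fun l => (pderiv k).map_smul _ _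
    rw [Finset.sum_congr rfl (fun l _ => hterm l)]
    rw [← Finset.add_sum_erase _ _ (Finset.mem_univ k), pderiv_integ_self]
    congr 1
    have hsub : Finset.Ioi k ⊆ Finset.univ.erase k := fun l hl => Finset.mem_erase.2
      ⟨ne_of_gt (Finset.mem_Ioi.1 hl), Finset.mem_univ l⟩
    have hz : ∀ l ∈ Finset.univ.erase k, l ∉ Finset.Ioi k →
        ν j l • pderiv k (integ l (Λ j)) = 0 := by
      intro l hl hnot
      have hlk : l < k := by
        rcases lt_trichotomy l k with h | h | h
        · exact h
        · exact absurd rfl (h ▸ (Finset.mem_erase.1 hl).1)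
        · exact absurd (Finset.mem_Ioi.2 h) hnot
      rw [pderiv_integ_lt k l hlk, smul_zero]
    rw [show (∑ l ∈ Finset.univ.erase k, ν j l • pderiv k (integ l (Λ j)))
        = ∑ l ∈ Finset.Ioi k, ν j l • pderiv k (integ l (Λ j)) from
      (Finset.sum_subset hsub hz).symm]
    exact Finset.sum_congr rfl (fun l hl => by
      rw [pderiv_integ_gt k l (Finset.mem_Ioi.1 hl)])
  rw [map_sum, Finset.sum_congr rfl (fun j _ => step1 j), Finset.sum_add_distrib]
  rw [Finset.sum_comm]
  have step2 : ∀ l, l ∈ Finset.Ioi k →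
      ∑ j, ν j l • integ l (pderiv k (Λ j))
        = ∑ j, ν j k •
            (aeval (fun i => if i ≤ l then (X i : MvPolynomial (Fin n) ℂ) else 0) (Λ j)
              - aeval (fun i => if i < l then (X i : MvPolynomial (Fin n) ℂ) else 0) (Λ j)) := by
    intro l hl
    have hkl : k < l := Finset.mem_Ioi.1 hl
    have hsw : ∑ j, ν j l • pderiv k (Λ j) = ∑ j, ν j k • pderiv l (Λ j) := by
      have := hcomm k l hkl
      rw [Finset.sum_sub_distrib] at this
      linear_combination (norm := module) -this
    calc ∑ j, ν j l • integ l (pderiv k (Λ j))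
        = integ l (∑ j, ν j l • pderiv k (Λ j)) := by
          rw [integ_sum]
          exact Finset.sum_congr rfl (fun j _ => (integ_smul l _ _).symm)
      _ = integ l (∑ j, ν j k • pderiv l (Λ j)) := by rw [hsw]
      _ = ∑ j, ν j k • integ l (pderiv l (Λ j)) := by
          rw [integ_sum]
          exact Finset.sum_congr rfl (fun j _ => integ_smul l _ _)
      _ = _ := Finset.sum_congr rfl (fun j _ => by rw [integ_pderiv_self])
  rw [Finset.sum_congr rfl step2, Finset.sum_comm, ← Finset.sum_add_distrib]
  apply Finset.sum_congr rfl
  intro j _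
  rw [← Finset.smul_sum, ← smul_add, telescope]

lemma totalDegree_integ_le (l : Fin n) (Λ : MvPolynomial (Fin n) ℂ) :
    (integ l Λ).totalDegree ≤ Λ.totalDegree + 1 := by
  set Q := aeval (fun i => if i ≤ l then (X i : MvPolynomial (Fin n) ℂ) else 0) Λ with hQ
  have hQsupp : Q.support ⊆ Λ.support := by
    intro γ hγ
    rw [MvPolynomial.mem_support_iff] at hγ ⊢
    intro hc
    apply hγ
    rw [hQ, coeff_aeval_ite (fun i => i ≤ l), hc]
    split_ifs <;> rfl
  have hQdeg : Q.totalDegree ≤ Λ.totalDegree := Finset.sup_mono hQsupp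
  have hI : integ l Λ = ∑ β ∈ Q.support,
      monomial (β + Finsupp.single l 1) (coeff β Q / ((β l : ℂ) + 1)) := rfl
  rw [hI]
  apply le_trans (totalDegree_finset_sum _ _)
  apply Finset.sup_le
  intro β hβ
  apply le_trans (totalDegree_monomial_le _ _)
  have hsum : ((β + Finsupp.single l 1 : Fin n →₀ ℕ)).sum (fun _ e => e)
      = β.sum (fun _ e => e) + 1 := by
    rw [Finsupp.sum_add_index' (fun _ => rfl) (fun _ b₁ b₂ => rfl),
      Finsupp.sum_single_index rfl]
  show ((β + Finsupp.single l 1 : Fin n →₀ ℕ)).sum (fun _ e => e) ≤ Λ.totalDegree + 1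
  rw [hsum]
  exact Nat.add_le_add_right (le_trans (MvPolynomial.le_totalDegree hβ) hQdeg) 1

/-- a new dual element Δ obtained by integration from a derivation-stable
space vanishing on f, satisfying the commutation relations and Δ(f_l) = 0, has degree
≤ t, vanishes on the whole ideal (f), and D + ℂΔ is stable under derivation. -/
theorem statement8 {n N r t : ℕ} (ht : 0 < t) (ξ : Fin n → ℂ)
    (f : Fin N → MvPolynomial (Fin n) ℂ)
    (Λ : Fin r → MvPolynomial (Fin n) ℂ)
    (hdeg : ∀ j, (Λ j).totalDegree ≤ t - 1)
    (hstab : ∀ Λ' ∈ Submodule.span ℂ (Set.range Λ), ∀ k : Fin n,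
        pderiv k Λ' ∈ Submodule.span ℂ (Set.range Λ))
    (hvan : ∀ (j : Fin r) (i : Fin N), dapply ξ (Λ j) (f i) = 0)
    (ν : Fin r → Fin n → ℂ)
    (hcomm : ∀ k l : Fin n, k < l →
      ∑ j, (ν j k • pderiv l (Λ j) - ν j l • pderiv k (Λ j)) = 0)
    (Δ : MvPolynomial (Fin n) ℂ)
    (hΔ : Δ = ∑ j, ∑ k, ν j k • integ k (Λ j))
    (hΔf : ∀ l : Fin N, dapply ξ Δ (f l) = 0) :
    Δ.totalDegree ≤ t ∧
    (∀ p ∈ Ideal.span (Set.range f), dapply ξ Δ p = 0) ∧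
    (∀ Λ' ∈ Submodule.span ℂ (Set.range Λ ∪ {Δ}), ∀ k : Fin n,
      pderiv k Λ' ∈ Submodule.span ℂ (Set.range Λ ∪ {Δ})) := by
  have hkd : ∀ k, pderiv k Δ = ∑ j, ν j k • Λ j := by
    intro k
    rw [hΔ]
    exact key_deriv Λ ν hcomm k
  -- derivation stability of E := span (range Λ ∪ {Δ})
  have hstabE : ∀ Λ' ∈ Submodule.span ℂ (Set.range Λ ∪ {Δ}), ∀ k : Fin n,
      pderiv k Λ' ∈ Submodule.span ℂ (Set.range Λ ∪ {Δ}) := by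
    intro Λ' hΛ' k
    induction hΛ' using Submodule.span_induction with
    | mem x hx =>
      rcases hx with hx | hx
      · obtain ⟨j, rfl⟩ := hx
        have h1 : pderiv k (Λ j) ∈ Submodule.span ℂ (Set.range Λ) :=
          hstab (Λ j) (Submodule.subset_span (Set.mem_range_self j)) k
        exact Submodule.span_mono Set.subset_union_left h1
      · rw [Set.mem_singleton_iff] at hx
        subst hx
        rw [hkd k]
        apply Submodule.sum_mem
        intro j _
        exact Submodule.smul_mem _ _ (Submodule.subset_span
          (Set.mem_union_left _ (Set.mem_range_self j)))
    | zero => rw [map_zero]; exact Submodule.zero_mem _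
    | add x y hx hy ihx ihy => rw [map_add]; exact Submodule.add_mem _ ihx ihy
    | smul a x hx ihx =>
      rw [show pderiv k (a • x) = a • pderiv k x from (pderiv k).map_smul a x]
      exact Submodule.smul_mem _ _ ihx
  -- every element of E vanishes on the f i
  have hEvan : ∀ Λ' ∈ Submodule.span ℂ (Set.range Λ ∪ {Δ}), ∀ i : Fin N,
      dapply ξ Λ' (f i) = 0 := by
    intro Λ' hΛ'
    induction hΛ' using Submodule.span_induction with
    | mem x hx =>
      rcases hx with hx | hx
      · obtain ⟨j, rfl⟩ := hx
        exact hvan j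
      · rw [Set.mem_singleton_iff] at hx
        subst hx
        exact hΔf
    | zero => intro i; exact dapply_zero_left _
    | add x y hx hy ihx ihy => intro i; rw [dapply_add_left, ihx i, ihy i, add_zero]
    | smul a x hx ihx => intro i; rw [dapply_smul_left, ihx i, mul_zero]
  -- multiplication stability
  have hmul : ∀ g q : MvPolynomial (Fin n) ℂ,
      (∀ Λ' ∈ Submodule.span ℂ (Set.range Λ ∪ {Δ}), dapply ξ Λ' q = 0) →
      ∀ Λ' ∈ Submodule.span ℂ (Set.range Λ ∪ {Δ}), dapply ξ Λ' (g * q) = 0 := by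
    intro g
    induction g using MvPolynomial.induction_on with
    | C a =>
      intro q hq Λ' hΛ'
      rw [← smul_eq_C_mul, dapply_smul_right, hq Λ' hΛ', mul_zero]
    | add p1 p2 h1 h2 =>
      intro q hq Λ' hΛ'
      rw [add_mul, dapply_add_right, h1 q hq Λ' hΛ', h2 q hq Λ' hΛ', add_zero]
    | mul_X p i hp =>
      intro q hq Λ' hΛ'
      rw [show p * X i * q = X i * (p * q) by ring, dapply_X_mul,
        hp q hq Λ' hΛ', mul_zero, zero_add]
      exact hp q hq (pderiv i Λ') (hstabE Λ' hΛ' i)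
  refine ⟨?_, ?_, hstabE⟩
  · rw [hΔ]
    apply le_trans (totalDegree_finset_sum _ _)
    apply Finset.sup_le
    intro j _
    apply le_trans (totalDegree_finset_sum _ _)
    apply Finset.sup_le
    intro k _
    apply le_trans (totalDegree_smul_le _ _)
    apply le_trans (totalDegree_integ_le _ _)
    have := hdeg j
    omega
  · intro p hp
    have hDmem : Δ ∈ Submodule.span ℂ (Set.range Λ ∪ {Δ}) :=
      Submodule.subset_span (Set.mem_union_right _ (Set.mem_singleton Δ))
    have main : ∀ Λ' ∈ Submodule.span ℂ (Set.range Λ ∪ {Δ}), dapply ξ Λ' p = 0 := by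
      induction hp using Submodule.span_induction with
      | mem x hx =>
        obtain ⟨i, rfl⟩ := hx
        intro Λ' hΛ'
        exact hEvan Λ' hΛ' i
      | zero =>
        intro Λ' hΛ'
        have : (0 : MvPolynomial (Fin n) ℂ) = (0 : ℂ) • 0 := by rw [zero_smul]
        rw [this, dapply_smul_right, zero_mul]
      | add x y hx hy ihx ihy =>
        intro Λ' hΛ'
        rw [dapply_add_right, ihx Λ' hΛ', ihy Λ' hΛ', add_zero]
      | smul a x hx ihx =>
        intro Λ' hΛ'
        rw [smul_eq_mul]
        exact hmul a x ihx Λ' hΛ'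
    exact main Δ hDmem
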